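/- arXiv:2512.24751 — 2 statements merged into one kernel-verified Lean document; each statement's English description precedes it below -/
import Mathlib

section
/- Let G be a locally compact second-countable amenable group with right-invariant Haar measure μ and Følner sequence (F_n), and let u be a strongly continuous unitary representation of G on a Hilbert space H. Then the averages B_n x := (1/μ(F_n)) ∫_{F_n} u_s(x) dμ(s) converge in norm for every x ∈ H; the limit is the orthogonal projection of x onto the subspace of G-invariant vectors. -/
open MeasureTheory Filter Topology Pointwise

/-- Mean ergodic theorem for a strongly continuous unitary representation of a
locally compact second-countable amenable group: the Følner averages `B_n x` converge in norm,
and the limit `z` is the orthogonal projection of `x` onto the subspace of `G`-invariant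
vectors (i.e. `z` is invariant and `x - z` is orthogonal to every invariant vector). -/
theorem stmt_1
    {G : Type*} [Group G] [TopologicalSpace G] [IsTopologicalGroup G]
    [SecondCountableTopology G] [LocallyCompactSpace G]
    [MeasurableSpace G] [BorelSpace G]
    (μ : Measure G) [μ.IsMulRightInvariant]
    {H : Type*} [NormedAddCommGroup H] [InnerProductSpace ℂ H] [CompleteSpace H]
    (F : ℕ → Set G) (hFmeas : ∀ n, MeasurableSet (F n))
    (hFpos : ∀ n, 0 < μ (F n)) (hFfin : ∀ n, μ (F n) < ⊤)
    (hFolner : ∀ g : G, Tendsto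
      (fun n => (μ (symmDiff (F n * ({g} : Set G)) (F n))).toReal / (μ (F n)).toReal)
      atTop (nhds 0))
    (u : G → H →L[ℂ] H)
    (hu_iso : ∀ (t : G) (x : H), ‖u t x‖ = ‖x‖)
    (hu_one : ∀ x : H, u 1 x = x)
    (hu_mul : ∀ (s t : G) (x : H), u s (u t x) = u (s * t) x)
    (hu_cont : ∀ x : H, Continuous fun t => u t x)
    (hInt : ∀ (n : ℕ) (x : H), IntegrableOn (fun t => u t x) (F n) μ)
    (x : H) :
    ∃ z : H, (∀ g : G, u g z = z) ∧
      Tendsto (fun n => (μ (F n)).toReal⁻¹ • ∫ t in F n, u t x ∂μ) atTop (nhds z) ∧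
      ∀ w : H, (∀ g : G, u g w = w) → (inner ℂ (x - z) w : ℂ) = 0 := by
  classical
  have hμpos : ∀ n, 0 < (μ (F n)).toReal :=
    fun n => ENNReal.toReal_pos (hFpos n).ne' (hFfin n).ne
  set B : ℕ → H → H := fun n v => (μ (F n)).toReal⁻¹ • ∫ t in F n, u t v ∂μ with hB
  -- unitary preserves inner ℂ products
  have hinner : ∀ (g : G) (v w : H), (inner ℂ (u g v) (u g w) : ℂ) = inner ℂ v w := by
    intro g v w
    have : Isometry (u g) := AddMonoidHomClass.isometry_of_norm (u g) (hu_iso g)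
    let f : H →ₗᵢ[ℂ] H := ⟨(u g : H →ₗ[ℂ] H), hu_iso g⟩
    exact f.inner_map_map v w
  -- inverse action
  have hu_inv : ∀ (g : G) (v : H), u g⁻¹ (u g v) = v := by
    intro g v; rw [hu_mul, inv_mul_cancel, hu_one]
  have hu_inv' : ∀ (g : G) (v : H), u g (u g⁻¹ v) = v := by
    intro g v; rw [hu_mul, mul_inv_cancel, hu_one]
  -- basic properties of B
  have hBsub : ∀ n v w, B n (v - w) = B n v - B n w := by
    intro n v w
    have : (fun t => u t (v - w)) = fun t => u t v - u t w := by
      ext t; exact map_sub (u t) v w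
    simp only [hB, this, integral_sub (hInt n v) (hInt n w), smul_sub]
  have hBadd : ∀ n v w, B n (v + w) = B n v + B n w := by
    intro n v w
    have : (fun t => u t (v + w)) = fun t => u t v + u t w := by
      ext t; exact map_add (u t) v w
    simp only [hB, this, integral_add (hInt n v) (hInt n w), smul_add]
  have hBsmul : ∀ (n : ℕ) (c : ℂ) (v : H), B n (c • v) = c • B n v := by
    intro n c v
    have : (fun t => u t (c • v)) = fun t => c • u t v := by
      ext t; exact map_smul (u t) c v
    rw [hB]
    simp only [this, integral_smul]
    rw [smul_comm]
  have hBzero : ∀ n, B n 0 = 0 := by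
    intro n
    have : (fun t => u t (0 : H)) = fun _ => (0 : H) := by ext t; exact map_zero (u t)
    simp [hB, this]
  -- B n of an invariant vector
  have hBconst : ∀ (n : ℕ) (z : H), (∀ g, u g z = z) → B n z = z := by
    intro n z hz
    have h1 : (fun t => u t z) = fun _ => z := by ext t; exact hz t
    rw [hB]
    simp only [h1, setIntegral_const, measureReal_def]
    rw [smul_smul, inv_mul_cancel₀ (hμpos n).ne', one_smul]
  -- uniform bound
  have hbound : ∀ (n : ℕ) (v : H), ‖B n v‖ ≤ ‖v‖ := by
    intro n v
    have h1 : ‖∫ t in F n, u t v ∂μ‖ ≤ (μ (F n)).toReal * ‖v‖ := by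
      calc ‖∫ t in F n, u t v ∂μ‖ ≤ ∫ t in F n, ‖u t v‖ ∂μ :=
            norm_integral_le_integral_norm _
        _ = ∫ _t in F n, ‖v‖ ∂μ := by
            apply integral_congr_ae; filter_upwards with t using hu_iso t v
        _ = (μ (F n)).toReal * ‖v‖ := by rw [setIntegral_const]; simp [smul_eq_mul, measureReal_def]
    rw [hB]
    simp only [norm_smul, norm_inv, Real.norm_eq_abs, abs_of_pos (hμpos n)]
    calc (μ (F n)).toReal⁻¹ * ‖∫ t in F n, u t v ∂μ‖
        ≤ (μ (F n)).toReal⁻¹ * ((μ (F n)).toReal * ‖v‖) := by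
          gcongr
      _ = ‖v‖ := by rw [← mul_assoc, inv_mul_cancel₀ (hμpos n).ne', one_mul]
  -- picture of translated sets
  have himg : ∀ (g : G) (s : Set G), s * ({g} : Set G) = (· * g⁻¹) ⁻¹' s := by
    intro g s; ext t
    simp only [Set.mul_singleton, Set.mem_image, Set.mem_preimage]
    constructor
    · rintro ⟨y, hy, rfl⟩; simpa using hy
    · intro h; exact ⟨t * g⁻¹, h, by simp⟩
  have himg' : ∀ (g : G) (s : Set G), s * ({g} : Set G) = (· * g) '' s := by
    intro g s; exact Set.mul_singleton
  have hmeasA : ∀ (n : ℕ) (g : G), MeasurableSet (F n * ({g} : Set G)) := by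
    intro n g; rw [himg]
    exact (hFmeas n).preimage (measurable_mul_const g⁻¹)
  have hμA : ∀ (n : ℕ) (g : G), μ (F n * ({g} : Set G)) = μ (F n) := by
    intro n g; rw [himg]
    exact (measurePreserving_mul_right μ g⁻¹).measure_preimage_emb
      (MeasurableEquiv.mulRight g⁻¹).measurableEmbedding _
  -- norm of a set integral of the orbit map
  have hnorm_le : ∀ (s : Set G) (v : H), ‖∫ t in s, u t v ∂μ‖ ≤ (μ s).toReal * ‖v‖ := by
    intro s v
    calc ‖∫ t in s, u t v ∂μ‖ ≤ ∫ t in s, ‖u t v‖ ∂μ := norm_integral_le_integral_norm _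
      _ = ∫ _t in s, ‖v‖ ∂μ := by
          apply integral_congr_ae; filter_upwards with t using hu_iso t v
      _ = (μ s).toReal * ‖v‖ := by rw [setIntegral_const]; simp [smul_eq_mul, measureReal_def]
  -- convergence on generators
  have hgen : ∀ (v : H) (g : G), Tendsto (fun n => B n (v - u g v)) atTop (nhds 0) := by
    intro v g
    have key : ∀ n, ‖B n (v - u g v)‖ ≤
        (μ (symmDiff (F n * ({g} : Set G)) (F n))).toReal / (μ (F n)).toReal * ‖v‖ := by
      intro n
      set A := F n * ({g} : Set G) with hA
      have hAmeas : MeasurableSet A := hmeasA n g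
      have hμAfin : μ A < ⊤ := by rw [hμA n g]; exact hFfin n
      have hIntA : IntegrableOn (fun t => u t v) A μ := by
        rw [hA, himg' g]
        rw [(measurePreserving_mul_right μ g).integrableOn_image
          (MeasurableEquiv.mulRight g).measurableEmbedding]
        have : ((fun t => u t v) ∘ (· * g)) = fun t => u t (u g v) := by
          ext t; simp [Function.comp, hu_mul]
        rw [this]; exact hInt n (u g v)
      have hchg : ∫ t in F n, u t (u g v) ∂μ = ∫ t in A, u t v ∂μ := by
        rw [hA, himg' g, (measurePreserving_mul_right μ g).setIntegral_image_emb
          (MeasurableEquiv.mulRight g).measurableEmbedding]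
        apply integral_congr_ae; filter_upwards with t
        rw [hu_mul]
      -- split the difference of set integrals over the symmetric difference
      have hsplit1 : (∫ t in F n ∩ A, u t v ∂μ) + ∫ t in F n \ A, u t v ∂μ
          = ∫ t in F n, u t v ∂μ := integral_inter_add_diff hAmeas (hInt n v)
      have hsplit2 : (∫ t in A ∩ F n, u t v ∂μ) + ∫ t in A \ F n, u t v ∂μ
          = ∫ t in A, u t v ∂μ := integral_inter_add_diff (hFmeas n) hIntA
      have hdiff : (∫ t in F n, u t v ∂μ) - ∫ t in A, u t v ∂μ
          = (∫ t in F n \ A, u t v ∂μ) - ∫ t in A \ F n, u t v ∂μ := by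
        rw [← hsplit1, ← hsplit2, Set.inter_comm]; abel
      have hBn : B n (v - u g v)
          = (μ (F n)).toReal⁻¹ • ((∫ t in F n \ A, u t v ∂μ) - ∫ t in A \ F n, u t v ∂μ) := by
        rw [hBsub, hB]
        simp only [← smul_sub]
        rw [hchg, hdiff]
      have hμsum : (μ (symmDiff A (F n))).toReal
          = (μ (A \ F n)).toReal + (μ (F n \ A)).toReal := by
        rw [Set.symmDiff_def, measure_union disjoint_sdiff_sdiff ((hFmeas n).diff hAmeas)]
        exact ENNReal.toReal_add
          (((measure_mono Set.diff_subset).trans_lt hμAfin).ne)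
          (((measure_mono Set.diff_subset).trans_lt (hFfin n)).ne)
      rw [hBn]
      rw [norm_smul, norm_inv, Real.norm_eq_abs, abs_of_pos (hμpos n), div_eq_inv_mul,
        mul_assoc]
      gcongr
      calc ‖(∫ t in F n \ A, u t v ∂μ) - ∫ t in A \ F n, u t v ∂μ‖
          ≤ ‖∫ t in F n \ A, u t v ∂μ‖ + ‖∫ t in A \ F n, u t v ∂μ‖ := norm_sub_le _ _
        _ ≤ (μ (F n \ A)).toReal * ‖v‖ + (μ (A \ F n)).toReal * ‖v‖ := by
            exact add_le_add (hnorm_le _ v) (hnorm_le _ v)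
        _ = (μ (symmDiff A (F n))).toReal * ‖v‖ := by rw [hμsum]; ring
    have hlim : Tendsto (fun n =>
        (μ (symmDiff (F n * ({g} : Set G)) (F n))).toReal / (μ (F n)).toReal * ‖v‖)
        atTop (nhds 0) := by
      simpa using (hFolner g).mul_const ‖v‖
    rw [tendsto_zero_iff_norm_tendsto_zero]
    exact squeeze_zero (fun n => norm_nonneg _) key hlim
  -- the invariant subspace
  let V : Submodule ℂ H :=
    { carrier := {z : H | ∀ g : G, u g z = z}
      add_mem' := fun {a b} ha hb g => by rw [map_add, ha g, hb g]
      zero_mem' := fun g => map_zero (u g)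
      smul_mem' := fun c {a} ha g => by rw [_root_.map_smul, ha g] }
  have hVmem : ∀ z : H, z ∈ V ↔ ∀ g : G, u g z = z := fun _ => Iff.rfl
  have hVclosed : IsClosed (V : Set H) := by
    have : (V : Set H) = ⋂ g : G, {z : H | u g z = z} := by
      ext z; simp only [Set.mem_iInter]; exact Iff.rfl
    rw [this]
    exact isClosed_iInter fun g => isClosed_eq (u g).continuous continuous_id
  haveI : CompleteSpace V := hVclosed.completeSpace_coe
  set W : Set H := {d : H | ∃ (v : H) (g : G), d = v - u g v} with hW
  set S : Submodule ℂ H := Submodule.span ℂ W with hS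
  -- the orthogonal complement of the span of coboundaries is the invariant subspace
  have hSperp : Sᗮ = V := by
    ext w
    rw [Submodule.mem_orthogonal, hVmem]
    constructor
    · intro h g
      have h' : ∀ v : H, (inner ℂ (v - u g⁻¹ v) w : ℂ) = 0 := fun v =>
        h _ (Submodule.subset_span ⟨v, g⁻¹, rfl⟩)
      have h2 : ∀ v : H, (inner ℂ v (w - u g w) : ℂ) = 0 := by
        intro v
        have h0 := h' v
        rw [inner_sub_left] at h0
        have h3 : (inner ℂ (u g⁻¹ v) w : ℂ) = inner ℂ v (u g w) := by
          conv_lhs => rw [← hu_inv g w]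
          exact hinner g⁻¹ v (u g w)
        rw [h3] at h0
        rw [inner_sub_right]
        exact h0
      have h4 := h2 (w - u g w)
      rw [inner_self_eq_zero] at h4
      exact (sub_eq_zero.mp h4).symm
    · intro hw d hd
      induction hd using Submodule.span_induction with
      | mem d hd =>
          obtain ⟨v, g, rfl⟩ := hd
          rw [inner_sub_left]
          have : (inner ℂ (u g v) w : ℂ) = inner ℂ v w := by
            conv_lhs => rw [← hw g]
            exact hinner g v w
          rw [this, sub_self]
      | zero => exact inner_zero_left _
      | add a b _ _ ha hb => rw [inner_add_left, ha, hb, add_zero]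
      | smul c a _ ha => rw [inner_smul_left, ha, mul_zero]
  have hVperp : Vᗮ = S.topologicalClosure := by
    rw [← hSperp, Submodule.orthogonal_orthogonal_eq_closure]
  -- convergence on the span
  have hspan : ∀ s ∈ S, Tendsto (fun n => B n s) atTop (nhds 0) := by
    intro s hs
    induction hs using Submodule.span_induction with
    | mem d hd =>
        obtain ⟨v, g, rfl⟩ := hd
        exact hgen v g
    | zero => simpa [hBzero] using (tendsto_const_nhds : Tendsto (fun _ : ℕ => (0 : H)) atTop _)
    | add a b _ _ ha hb =>
        have := ha.add hb
        simp only [hBadd]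
        simpa using this
    | smul c a _ ha =>
        have := ha.const_smul c
        simp only [hBsmul]
        simpa using this
  -- convergence on the closure of the span
  have hclos : ∀ y ∈ S.topologicalClosure, Tendsto (fun n => B n y) atTop (nhds 0) := by
    intro y hy
    have hy' : y ∈ closure (S : Set H) := by
      rw [← Submodule.topologicalClosure_coe]; exact hy
    rw [Metric.tendsto_atTop]
    intro ε hε
    obtain ⟨s, hsS, hs⟩ := Metric.mem_closure_iff.mp hy' (ε/3) (by positivity)
    obtain ⟨N, hN⟩ := Metric.tendsto_atTop.mp (hspan s hsS) (ε/3) (by positivity)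
    refine ⟨N, fun n hn => ?_⟩
    have hys : s + (y - s) = y := by abel
    have h1 : B n y = B n s + B n (y - s) := by rw [← hBadd, hys]
    have h2 : dist (B n s) 0 < ε/3 := hN n hn
    rw [dist_zero_right] at h2
    have h3 : ‖y - s‖ < ε/3 := by rw [← dist_eq_norm]; exact hs
    calc dist (B n y) 0 = ‖B n s + B n (y - s)‖ := by rw [dist_zero_right, h1]
      _ ≤ ‖B n s‖ + ‖B n (y - s)‖ := norm_add_le _ _
      _ ≤ ‖B n s‖ + ‖y - s‖ := by have := hbound n (y - s); linarith
      _ < ε/3 + ε/3 := add_lt_add h2 h3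
      _ < ε := by linarith
  -- assemble
  set z : H := (V.orthogonalProjectionOnto x : H) with hz
  have hzV : z ∈ V := SetLike.coe_mem _
  have hzinv : ∀ g : G, u g z = z := (hVmem z).mp hzV
  have hxz : x - z ∈ Vᗮ := V.sub_starProjection_mem_orthogonal x
  refine ⟨z, hzinv, ?_, ?_⟩
  · have hx' : x - z ∈ S.topologicalClosure := hVperp ▸ hxz
    have h0 := hclos _ hx'
    have heq : ∀ n : ℕ, ((μ (F n)).toReal⁻¹ • ∫ t in F n, u t x ∂μ) = z + B n (x - z) := by
      intro n
      have hzx : z + (x - z) = x := by abel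
      have h1 : B n x = B n z + B n (x - z) := by rw [← hBadd, hzx]
      have h2 : B n x = (μ (F n)).toReal⁻¹ • ∫ t in F n, u t x ∂μ := rfl
      rw [← h2, h1, hBconst n z hzinv]
    simp only [heq]
    simpa using (tendsto_const_nhds : Tendsto (fun _ : ℕ => z) atTop (nhds z)).add h0
  · intro w hw
    exact (Submodule.mem_orthogonal' V (x - z)).mp hxz w ((hVmem w).mpr hw)
end

section
/- Let (E, G, γ) be a dynamical system on a Banach space E with sup_{s∈G} ‖γ_s‖ < ∞, over an amenable group G with right-invariant Haar measure μ and Følner sequence (F_n). Define B_m(a) := (1/μ(F_m)) ∫_{F_m} γ_s(a) dμ(s). Then for every k ∈ ℕ and a ∈ E, lim_{n→∞} ‖B_n(a − B_k(a))‖ = 0. -/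
open MeasureTheory Filter Topology Pointwise

/-- For a uniformly bounded dynamical system `(E, G, γ)` on a Banach space `E`
over an amenable group with Følner sequence `(F n)`, the averages satisfy
`‖B_n(a − B_k(a))‖ → 0` for every `k` and `a ∈ E`. -/
theorem stmt_2
    {G : Type*} [Group G] [TopologicalSpace G] [IsTopologicalGroup G]
    [SecondCountableTopology G] [LocallyCompactSpace G]
    [MeasurableSpace G] [BorelSpace G]
    (μ : Measure G) [μ.IsMulRightInvariant]
    {E : Type*} [NormedAddCommGroup E] [NormedSpace ℝ E] [CompleteSpace E]
    (F : ℕ → Set G) (hFmeas : ∀ n, MeasurableSet (F n))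
    (hFpos : ∀ n, 0 < μ (F n)) (hFfin : ∀ n, μ (F n) < ⊤)
    (hFolner : ∀ g : G, Tendsto
      (fun n => (μ (symmDiff (F n * ({g} : Set G)) (F n))).toReal / (μ (F n)).toReal)
      atTop (nhds 0))
    (γ : G → E →L[ℝ] E)
    (hγ_mul : ∀ (s t : G) (a : E), γ s (γ t a) = γ (s * t) a)
    (hγ_cont : ∀ a : E, Continuous fun s => γ s a)
    (C : ℝ) (hC : ∀ s : G, ‖γ s‖ ≤ C)
    (hInt : ∀ (n : ℕ) (a : E), IntegrableOn (fun s => γ s a) (F n) μ)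
    (k : ℕ) (a : E) :
    Tendsto (fun n =>
        ‖(μ (F n)).toReal⁻¹ •
          ∫ s in F n, γ s (a - (μ (F k)).toReal⁻¹ • ∫ t in F k, γ t a ∂μ) ∂μ‖)
      atTop (nhds 0) := by
  have hC0 : 0 ≤ C := (norm_nonneg (γ 1)).trans (hC 1)
  have hCa : 0 ≤ C * ‖a‖ := mul_nonneg hC0 (norm_nonneg a)
  have hnorm : ∀ s : G, ‖γ s a‖ ≤ C * ‖a‖ := fun s =>
    ((γ s).le_opNorm a).trans (mul_le_mul_of_nonneg_right (hC s) (norm_nonneg a))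
  have hfin : ∀ n : ℕ, IsFiniteMeasure (μ.restrict (F n)) := fun n =>
    ⟨by rw [Measure.restrict_apply_univ]; exact hFfin n⟩
  have htset : ∀ (n : ℕ) (t : G), F n * ({t} : Set G) = (fun x => x * t⁻¹) ⁻¹' (F n) := by
    intro n t; rw [Set.mul_singleton, Set.image_mul_right]
  have htmeas : ∀ (n : ℕ) (t : G), MeasurableSet (F n * ({t} : Set G)) := by
    intro n t; rw [htset]; exact (measurable_mul_const t⁻¹) (hFmeas n)
  have htmeasure : ∀ (n : ℕ) (t : G), μ (F n * ({t} : Set G)) = μ (F n) := by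
    intro n t
    rw [htset, ← Measure.map_apply (measurable_mul_const t⁻¹) (hFmeas n),
      map_mul_right_eq_self μ t⁻¹]
  have hIntOn : ∀ A : Set G, μ A < ⊤ → IntegrableOn (fun s => γ s a) A μ := by
    intro A hA
    haveI : IsFiniteMeasure (μ.restrict A) := ⟨by rw [Measure.restrict_apply_univ]; exact hA⟩
    exact Integrable.mono' (integrable_const (C * ‖a‖))
      ((hγ_cont a).aestronglyMeasurable.restrict) (ae_of_all _ fun s => hnorm s)
  have hμk : (μ (F k)).toReal ≠ 0 := (ENNReal.toReal_pos (hFpos k).ne' (hFfin k).ne).ne'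
  set ck : ℝ := (μ (F k)).toReal⁻¹ with hckdef
  have hck0 : 0 ≤ ck := inv_nonneg.mpr ENNReal.toReal_nonneg
  set b : E := a - ck • ∫ t in F k, γ t a ∂μ with hbdef
  -- expansion of γ s b
  have hγb : ∀ s : G, γ s b = γ s a - ck • ∫ t in F k, γ (s * t) a ∂μ := by
    intro s
    rw [hbdef, map_sub, _root_.map_smul]
    congr 1
    rw [← ContinuousLinearMap.integral_comp_comm (γ s) (hInt k a)]
    simp_rw [hγ_mul]
  -- translation of the inner integral
  have htrans : ∀ (n : ℕ) (t : G),
      ∫ s in F n, γ (s * t) a ∂μ = ∫ s in F n * ({t} : Set G), γ s a ∂μ := by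
    intro n t
    have : ∫ s in F n * ({t} : Set G), γ s a ∂μ = ∫ s in F n, γ (s * t) a ∂μ := by
      rw [← integral_indicator (htmeas n t),
        ← integral_mul_right_eq_self
          (fun x => (F n * ({t} : Set G)).indicator (fun s => γ s a) x) t,
        ← integral_indicator (hFmeas n)]
      congr 1
      funext x
      rw [htset]
      by_cases hx : x ∈ F n
      · rw [Set.indicator_of_mem hx, Set.indicator_of_mem (by simpa using hx)]
      · rw [Set.indicator_of_notMem hx, Set.indicator_of_notMem (by simpa using hx)]
    exact this.symm
  -- product integrability, Fubini
  have hu : ∀ n : ℕ, Integrable (Function.uncurry fun s t : G => γ (s * t) a)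
      ((μ.restrict (F n)).prod (μ.restrict (F k))) := by
    intro n
    haveI := hfin n; haveI := hfin k
    refine Integrable.mono' (integrable_const (C * ‖a‖)) ?_ (ae_of_all _ fun p => hnorm _)
    exact (Continuous.aestronglyMeasurable ((hγ_cont a).comp continuous_mul))
  have huswap : ∀ n : ℕ, Integrable (fun p : G × G => γ (p.2 * p.1) a)
      ((μ.restrict (F k)).prod (μ.restrict (F n))) := by
    intro n
    haveI := hfin n; haveI := hfin k
    refine Integrable.mono' (integrable_const (C * ‖a‖)) ?_ (ae_of_all _ fun p => hnorm _)
    exact (Continuous.aestronglyMeasurable ((hγ_cont a).comp (continuous_snd.mul continuous_fst)))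
  have hmarg : ∀ n : ℕ, Integrable (fun t => ∫ s in F n, γ (s * t) a ∂μ) (μ.restrict (F k)) :=
    fun n => (huswap n).integral_prod_left
  -- key identity
  have key : ∀ n : ℕ, (μ (F n)).toReal⁻¹ • ∫ s in F n, γ s b ∂μ
      = ck • ∫ t in F k, ((μ (F n)).toReal⁻¹ •
          ((∫ s in F n, γ s a ∂μ) - ∫ s in F n * ({t} : Set G), γ s a ∂μ)) ∂μ := by
    intro n
    haveI := hfin k
    set cn : ℝ := (μ (F n)).toReal⁻¹ with hcndef
    have hX : IntegrableOn (fun s => ck • ∫ t in F k, γ (s * t) a ∂μ) (F n) μ := by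
      have hfe : (fun s => ck • ∫ t in F k, γ (s * t) a ∂μ) = fun s => γ s a - γ s b := by
        funext s; rw [hγb s]; abel
      rw [hfe]; exact (hInt n a).sub (hInt n b)
    have h1 : ∫ s in F n, γ s b ∂μ
        = (∫ s in F n, γ s a ∂μ) - ck • ∫ s in F n, (∫ t in F k, γ (s * t) a ∂μ) ∂μ := by
      calc ∫ s in F n, γ s b ∂μ
          = ∫ s in F n, (γ s a - ck • ∫ t in F k, γ (s * t) a ∂μ) ∂μ := by simp_rw [hγb]
        _ = (∫ s in F n, γ s a ∂μ)
            - ∫ s in F n, (ck • ∫ t in F k, γ (s * t) a ∂μ) ∂μ := integral_sub (hInt n a) hX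
        _ = _ := by rw [integral_smul]
    have h2 : ∫ s in F n, (∫ t in F k, γ (s * t) a ∂μ) ∂μ
        = ∫ t in F k, (∫ s in F n * ({t} : Set G), γ s a ∂μ) ∂μ := by
      rw [MeasureTheory.integral_integral_swap (hu n)]
      exact integral_congr_ae (ae_of_all _ fun t => htrans n t)
    have h3 : cn • ∫ s in F n, γ s a ∂μ
        = ck • ∫ _t in F k, (cn • ∫ s in F n, γ s a ∂μ) ∂μ := by
      rw [setIntegral_const, smul_smul, hckdef, measureReal_def, inv_mul_cancel₀ hμk, one_smul]
    have h4 : IntegrableOn (fun t => cn • ∫ s in F n * ({t} : Set G), γ s a ∂μ) (F k) μ :=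
      ((hmarg n).smul cn).congr (ae_of_all _ fun t => by simp only [Pi.smul_apply]; rw [htrans n t])
    have h5 : ∫ t in F k, (cn •
          ((∫ s in F n, γ s a ∂μ) - ∫ s in F n * ({t} : Set G), γ s a ∂μ)) ∂μ
        = (∫ _t in F k, (cn • ∫ s in F n, γ s a ∂μ) ∂μ)
          - ∫ t in F k, (cn • ∫ s in F n * ({t} : Set G), γ s a ∂μ) ∂μ := by
      simp_rw [smul_sub]
      exact integral_sub (integrable_const _) h4
    rw [h5, smul_sub, ← h3, h1, smul_sub, h2, smul_comm cn ck, integral_smul]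
  -- measurability of the overlap function
  have hEmeas : ∀ n : ℕ, Measurable (fun t : G => μ.restrict (F n) (F n * ({t} : Set G))) := by
    intro n
    haveI := hfin n
    have hs : MeasurableSet {p : G × G | p.2 * p.1⁻¹ ∈ F n} :=
      (measurable_snd.mul measurable_fst.inv) (hFmeas n)
    have hm := measurable_measure_prodMk_left (ν := μ.restrict (F n)) hs
    have hset : ∀ t : G, (Prod.mk t ⁻¹' {p : G × G | p.2 * p.1⁻¹ ∈ F n})
        = F n * ({t} : Set G) := by
      intro t
      rw [htset n t]
      rfl
    simpa only [hset] using hm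
  -- symm diff measure identity
  have hsymm : ∀ (n : ℕ) (t : G), (μ (symmDiff (F n * ({t} : Set G)) (F n))).toReal
      = 2 * ((μ (F n)).toReal - (μ.restrict (F n) (F n * ({t} : Set G))).toReal) := by
    intro n t
    set A : Set G := F n * ({t} : Set G) with hAdef
    have hA : MeasurableSet A := htmeas n t
    have hAμ : μ A = μ (F n) := htmeasure n t
    have fin1 : μ (A \ F n) ≠ ⊤ :=
      ((measure_mono Set.diff_subset).trans_lt (by rw [hAμ]; exact hFfin n)).ne
    have fin2 : μ (F n \ A) ≠ ⊤ :=
      ((measure_mono Set.diff_subset).trans_lt (hFfin n)).ne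
    have finAB : μ (A ∩ F n) ≠ ⊤ :=
      ((measure_mono Set.inter_subset_right).trans_lt (hFfin n)).ne
    have finBA : μ (F n ∩ A) ≠ ⊤ :=
      ((measure_mono Set.inter_subset_left).trans_lt (hFfin n)).ne
    have hrow : μ.restrict (F n) A = μ (A ∩ F n) := Measure.restrict_apply hA
    have h1 : μ (symmDiff A (F n)) = μ (A \ F n) + μ (F n \ A) := by
      rw [Set.symmDiff_def]
      exact measure_union disjoint_sdiff_sdiff ((hFmeas n).diff hA)
    have h2 : μ (A ∩ F n) + μ (A \ F n) = μ A := measure_inter_add_diff A (hFmeas n)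
    have h3 : μ (F n ∩ A) + μ (F n \ A) = μ (F n) := measure_inter_add_diff (F n) hA
    have e1 : (μ (symmDiff A (F n))).toReal = (μ (A \ F n)).toReal + (μ (F n \ A)).toReal := by
      rw [h1, ENNReal.toReal_add fin1 fin2]
    have e2 : (μ (A ∩ F n)).toReal + (μ (A \ F n)).toReal = (μ (F n)).toReal := by
      rw [← ENNReal.toReal_add finAB fin1, h2, hAμ]
    have e3 : (μ (A ∩ F n)).toReal + (μ (F n \ A)).toReal = (μ (F n)).toReal := by
      rw [← ENNReal.toReal_add finAB fin2, Set.inter_comm A (F n), h3]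
    rw [hrow]
    linarith [e1, e2, e3]
  -- the dominating sequence
  set φ : ℕ → G → ℝ := fun n t =>
    (C * ‖a‖) * ((μ (symmDiff (F n * ({t} : Set G)) (F n))).toReal / (μ (F n)).toReal)
    with hφdef
  have hφnonneg : ∀ n t, 0 ≤ φ n t :=
    fun n t => mul_nonneg hCa (div_nonneg ENNReal.toReal_nonneg ENNReal.toReal_nonneg)
  have hφmeas : ∀ n, Measurable (φ n) := by
    intro n
    have hfe : φ n = fun t => (C * ‖a‖) *
        ((2 * ((μ (F n)).toReal - (μ.restrict (F n) (F n * ({t} : Set G))).toReal))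
          / (μ (F n)).toReal) := by
      funext t
      simp only [hφdef]
      rw [hsymm n t]
    rw [hfe]
    exact measurable_const.mul
      (((measurable_const.sub (hEmeas n).ennreal_toReal).const_mul 2).div_const _)
  have hφle : ∀ n t, φ n t ≤ 2 * (C * ‖a‖) := by
    intro n t
    have hpos : 0 < (μ (F n)).toReal := ENNReal.toReal_pos (hFpos n).ne' (hFfin n).ne
    have hμΔ : (μ (symmDiff (F n * ({t} : Set G)) (F n))).toReal ≤ 2 * (μ (F n)).toReal := by
      have hle : μ (symmDiff (F n * ({t} : Set G)) (F n)) ≤ 2 * μ (F n) := by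
        calc μ (symmDiff (F n * ({t} : Set G)) (F n))
            ≤ μ (F n * ({t} : Set G) ∪ F n) := measure_mono Set.symmDiff_subset_union
          _ ≤ μ (F n * ({t} : Set G)) + μ (F n) := measure_union_le _ _
          _ = 2 * μ (F n) := by rw [htmeasure n t, two_mul]
      calc (μ (symmDiff (F n * ({t} : Set G)) (F n))).toReal
          ≤ (2 * μ (F n)).toReal := ENNReal.toReal_mono
            (by exact ENNReal.mul_ne_top (by norm_num) (hFfin n).ne) hle
        _ = 2 * (μ (F n)).toReal := by
            rw [ENNReal.toReal_mul]; norm_num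
    have hr : (μ (symmDiff (F n * ({t} : Set G)) (F n))).toReal / (μ (F n)).toReal ≤ 2 := by
      rw [div_le_iff₀ hpos]; linarith
    calc φ n t ≤ (C * ‖a‖) * 2 := mul_le_mul_of_nonneg_left hr hCa
      _ = 2 * (C * ‖a‖) := mul_comm _ _
  have hφtend : ∀ t : G, Tendsto (fun n => φ n t) atTop (nhds 0) := by
    intro t
    have h := (hFolner t).const_mul (C * ‖a‖)
    rw [mul_zero] at h
    exact h
  have hφint : ∀ n, IntegrableOn (φ n) (F k) μ := by
    intro n
    haveI := hfin k
    refine Integrable.mono' (integrable_const (2 * (C * ‖a‖)))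
      ((hφmeas n).aestronglyMeasurable.restrict) (ae_of_all _ fun t => ?_)
    rw [Real.norm_of_nonneg (hφnonneg n t)]
    exact hφle n t
  -- pointwise bound
  have hgle : ∀ (n : ℕ) (t : G), ‖(μ (F n)).toReal⁻¹ •
      ((∫ s in F n, γ s a ∂μ) - ∫ s in F n * ({t} : Set G), γ s a ∂μ)‖ ≤ φ n t := by
    intro n t
    set A : Set G := F n * ({t} : Set G) with hAdef
    have hA : MeasurableSet A := htmeas n t
    have hAμ : μ A = μ (F n) := htmeasure n t
    have fin1 : μ (F n \ A) < ⊤ := (measure_mono Set.diff_subset).trans_lt (hFfin n)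
    have fin2 : μ (A \ F n) < ⊤ :=
      (measure_mono Set.diff_subset).trans_lt (by rw [hAμ]; exact hFfin n)
    have hIA : IntegrableOn (fun s => γ s a) A μ := hIntOn A (by rw [hAμ]; exact hFfin n)
    have hsplit1 : ∫ s in F n, γ s a ∂μ
        = ∫ s in F n ∩ A, γ s a ∂μ + ∫ s in F n \ A, γ s a ∂μ :=
      (integral_inter_add_diff hA (hInt n a)).symm
    have hsplit2 : ∫ s in A, γ s a ∂μ
        = ∫ s in A ∩ F n, γ s a ∂μ + ∫ s in A \ F n, γ s a ∂μ :=
      (integral_inter_add_diff (hFmeas n) hIA).symm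
    have hdiff : (∫ s in F n, γ s a ∂μ) - ∫ s in A, γ s a ∂μ
        = (∫ s in F n \ A, γ s a ∂μ) - ∫ s in A \ F n, γ s a ∂μ := by
      rw [hsplit1, hsplit2, Set.inter_comm (F n) A]
      abel
    have hΔ : μ (symmDiff A (F n)) = μ (A \ F n) + μ (F n \ A) := by
      rw [Set.symmDiff_def]
      exact measure_union disjoint_sdiff_sdiff ((hFmeas n).diff hA)
    have hsum : (μ (F n \ A)).toReal + (μ (A \ F n)).toReal
        = (μ (symmDiff A (F n))).toReal := by
      rw [hΔ, ENNReal.toReal_add fin2.ne fin1.ne, add_comm]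
    have b1 : ‖∫ s in F n \ A, γ s a ∂μ‖ ≤ (C * ‖a‖) * (μ (F n \ A)).toReal :=
      norm_setIntegral_le_of_norm_le_const fin1 (fun x _ => hnorm x)
    have b2 : ‖∫ s in A \ F n, γ s a ∂μ‖ ≤ (C * ‖a‖) * (μ (A \ F n)).toReal :=
      norm_setIntegral_le_of_norm_le_const fin2 (fun x _ => hnorm x)
    have hD : ‖(∫ s in F n, γ s a ∂μ) - ∫ s in A, γ s a ∂μ‖
        ≤ (C * ‖a‖) * (μ (symmDiff A (F n))).toReal := by
      rw [hdiff]
      calc ‖(∫ s in F n \ A, γ s a ∂μ) - ∫ s in A \ F n, γ s a ∂μ‖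
          ≤ ‖∫ s in F n \ A, γ s a ∂μ‖ + ‖∫ s in A \ F n, γ s a ∂μ‖ := norm_sub_le _ _
        _ ≤ (C * ‖a‖) * (μ (F n \ A)).toReal + (C * ‖a‖) * (μ (A \ F n)).toReal :=
            add_le_add b1 b2
        _ = (C * ‖a‖) * (μ (symmDiff A (F n))).toReal := by rw [← mul_add, hsum]
    have hcn0 : (0:ℝ) ≤ (μ (F n)).toReal⁻¹ := inv_nonneg.mpr ENNReal.toReal_nonneg
    calc ‖(μ (F n)).toReal⁻¹ • ((∫ s in F n, γ s a ∂μ) - ∫ s in A, γ s a ∂μ)‖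
        = (μ (F n)).toReal⁻¹ * ‖(∫ s in F n, γ s a ∂μ) - ∫ s in A, γ s a ∂μ‖ := by
          rw [norm_smul, Real.norm_eq_abs, abs_of_nonneg hcn0]
      _ ≤ (μ (F n)).toReal⁻¹ * ((C * ‖a‖) * (μ (symmDiff A (F n))).toReal) :=
          mul_le_mul_of_nonneg_left hD hcn0
      _ = φ n t := by
          simp only [hφdef, hAdef]
          rw [div_eq_mul_inv]
          ring
  -- assembling
  have hmain : ∀ n : ℕ, ‖(μ (F n)).toReal⁻¹ • ∫ s in F n, γ s b ∂μ‖
      ≤ ck * ∫ t in F k, φ n t ∂μ := by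
    intro n
    rw [key n, norm_smul, Real.norm_eq_abs, abs_of_nonneg hck0]
    refine mul_le_mul_of_nonneg_left ?_ hck0
    calc ‖∫ t in F k, ((μ (F n)).toReal⁻¹ •
            ((∫ s in F n, γ s a ∂μ) - ∫ s in F n * ({t} : Set G), γ s a ∂μ)) ∂μ‖
        ≤ ∫ t in F k, ‖(μ (F n)).toReal⁻¹ •
            ((∫ s in F n, γ s a ∂μ) - ∫ s in F n * ({t} : Set G), γ s a ∂μ)‖ ∂μ :=
          norm_integral_le_integral_norm _
      _ ≤ ∫ t in F k, φ n t ∂μ := integral_mono_of_nonneg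
          (ae_of_all _ fun t => norm_nonneg _) (hφint n) (ae_of_all _ fun t => hgle n t)
  have hlim : Tendsto (fun n => ck * ∫ t in F k, φ n t ∂μ) atTop (nhds 0) := by
    have h0 : Tendsto (fun n => ∫ t in F k, φ n t ∂μ) atTop
        (nhds (∫ _t in F k, (0:ℝ) ∂μ)) := by
      haveI := hfin k
      exact tendsto_integral_filter_of_dominated_convergence (fun _ => 2 * (C * ‖a‖))
        (Eventually.of_forall fun n => (hφmeas n).aestronglyMeasurable.restrict)
        (Eventually.of_forall fun n => ae_of_all _ fun t => by
          rw [Real.norm_of_nonneg (hφnonneg n t)]; exact hφle n t)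
        (integrable_const _)
        (ae_of_all _ fun t => hφtend t)
    rw [integral_zero] at h0
    simpa using h0.const_mul ck
  exact squeeze_zero (fun n => norm_nonneg _) hmain hlim
end
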